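/- Let k be a field of characteristic zero, W a k-vector space, γ a k-linear automorphism of W, and c ∈ k a nonzero element. Extend γ to a k-linear automorphism of the polynomial module W[X] = ⊕_{j≥0} W·X^j by γ(w·X^j) = γ(w)·(X + c)^j. Then the constant-term map Σ_j a_j X^j ↦ a_0 restricts to a k-linear bijection from the fixed space {v ∈ W[X] : γ(v) = v} onto the subspace W^{(γ−1)-nil} := {a ∈ W : (γ−1)^N a = 0 for some N ≥ 1}; its inverse sends a ∈ W^{(γ−1)-nil} to Σ_{j≥0} ((−1)^j / j!)·∇^j(a)·X^j, where ∇ := (1/c)·log γ = (1/c)·Σ_{i≥1} (−1)^{i+1}(γ−1)^i/i (a finite sum on each (γ−1)-nilpotent vector). Moreover, under this bijection, the k-linear derivation ν of W[X] given by ν(w·X^j) = −j·w·X^{j−1} corresponds to the operator ∇ on W^{(γ−1)-nil}. -/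

import Mathlib

/-- The truncated logarithm `∇ = (1/c)·log γ = (1/c)·Σ_{i=1}^{N} (-1)^{i+1}(γ-1)^i/i`,
which on every vector killed by `(γ-1)^N` agrees with the full series. -/
noncomputable def nablaOf {k W : Type*} [Field k] [AddCommGroup W] [Module k W]
    (γ : W ≃ₗ[k] W) (c : k) (N : ℕ) : W →ₗ[k] W :=
  c⁻¹ • ∑ i ∈ Finset.Icc 1 N,
    ((-1 : k) ^ (i + 1) / (i : k)) • ((γ.toLinearMap - LinearMap.id) ^ i)

set_option linter.unusedSectionVars false

namespace Stmt8Aux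
open Finset Polynomial


variable {k : Type*} [Field k] [CharZero k]

noncomputable def LL (k : Type*) [Field k] (N : ℕ) : k[X] :=
  ∑ i ∈ Icc 1 N, ((-1:k)^(i+1) / i) • (X:k[X])^i

lemma X_dvd_LL (N : ℕ) : (X:k[X]) ∣ LL k N := by
  refine Finset.dvd_sum fun i hi => ?_
  rw [smul_eq_C_mul]
  exact Dvd.dvd.mul_left (dvd_pow_self X (by have := (Finset.mem_Icc.mp hi).1; omega)) _

lemma derivative_LL (N : ℕ) :
    derivative (LL k N) = ∑ t ∈ range N, (-1:k)^t • (X:k[X])^t := by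
  rw [LL, map_sum, ← Finset.Ico_add_one_right_eq_Icc, Finset.sum_Ico_eq_sum_range]
  simp only [Nat.add_sub_cancel]
  refine Finset.sum_congr rfl fun t _ => ?_
  rw [derivative_smul, derivative_X_pow]
  rw [smul_eq_C_mul, smul_eq_C_mul, ← mul_assoc, ← C_mul]
  have h1 : ((1+t:ℕ):k) ≠ 0 := Nat.cast_ne_zero.mpr (by omega)
  rw [div_mul_cancel₀ _ h1]
  congr 2
  · rw [show 1+t+1 = t+2 from by omega, pow_succ, pow_succ]; ring
  · omega

lemma geom_aux (N : ℕ) : derivative (LL k N) * (1 + X) = 1 - (-X:k[X])^N := by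
  rw [derivative_LL]
  have h := geom_sum_mul (-X : k[X]) N
  have h2 : ∑ t ∈ range N, (-1:k)^t • (X:k[X])^t = ∑ t ∈ range N, (-X:k[X])^t := by
    refine Finset.sum_congr rfl fun t _ => ?_
    rw [smul_eq_C_mul, map_pow, map_neg, map_one, ← neg_pow]
  rw [h2]
  linear_combination (-1 : k[X]) * h

lemma lemP (r N : ℕ) (hrN : r ≤ N) :
    (X:k[X])^r ∣ (∑ m ∈ range r, ((-1:k)^m / m.factorial) • LL k N ^ m) * (1 + X) - 1 := by
  rcases Nat.eq_zero_or_pos r with rfl | hr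
  · simpa using one_dvd _
  obtain ⟨s, rfl⟩ : ∃ s, r = s + 1 := ⟨r - 1, by omega⟩
  set A := ∑ m ∈ range (s+1), ((-1:k)^m / m.factorial) • LL k N ^ m with hA
  set Am := ∑ m ∈ range s, ((-1:k)^m / m.factorial) • LL k N ^ m with hAm
  have hdA : derivative A = -(Am * derivative (LL k N)) := by
    rw [hA, map_sum, Finset.sum_range_succ']
    simp only [derivative_smul, derivative_pow, Nat.cast_zero, map_zero, zero_mul, smul_zero,
      add_zero, Nat.add_sub_cancel]
    rw [hAm, Finset.sum_mul, ← Finset.sum_neg_distrib]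
    refine Finset.sum_congr rfl fun x _ => ?_
    have hx : ((-1:k)^(x+1)/(x+1).factorial) * ((x+1:ℕ):k) = -((-1)^x / x.factorial) := by
      have hf : ((x+1).factorial : k) = ((x+1:ℕ):k) * x.factorial := by
        rw [Nat.factorial_succ]; push_cast; ring
      have hx1 : ((x+1:ℕ):k) ≠ 0 := Nat.cast_ne_zero.mpr (by omega)
      have e1 : ((-1:k)^(x+1)) = -(-1)^x := by rw [pow_succ]; ring
      rw [e1, hf, neg_div, neg_mul, neg_inj, div_mul_eq_mul_div, mul_comm,
        mul_div_mul_left _ _ hx1]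
    have hC : C ((-1:k)^(x+1)/(x+1).factorial) * C ((x+1:ℕ):k) = -C ((-1:k)^x / x.factorial) := by
      rw [← C_mul, hx, map_neg]
    rw [smul_eq_C_mul, smul_eq_C_mul]
    linear_combination (LL k N ^ x * derivative (LL k N)) * hC
  have hder : derivative (A * (1 + X) - 1)
      = ((-1:k)^s / s.factorial) • LL k N ^ s + (-X)^N * Am := by
    rw [derivative_sub, derivative_one, derivative_mul, hdA, derivative_add, derivative_one,
      derivative_X]
    have hsplit : A = Am + ((-1:k)^s / s.factorial) • LL k N ^ s := by
      rw [hA, hAm, Finset.sum_range_succ]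
    have hg := geom_aux (k := k) N
    linear_combination (-Am) * hg + hsplit
  rw [X_pow_dvd_iff]
  intro d hd
  have hA0 : A.coeff 0 = 1 := by
    rw [hA, finset_sum_coeff, Finset.sum_eq_single 0]
    · simp
    · intro m _ hm0
      rw [coeff_smul]
      have hX : (X:k[X]) ∣ LL k N ^ m := dvd_pow (X_dvd_LL N) hm0
      rw [X_dvd_iff] at hX
      rw [hX, smul_zero]
    · intro h; exact absurd (Finset.mem_range.mpr (by omega)) h
  match d, hd with
  | 0, _ =>
    rw [coeff_sub, mul_coeff_zero, coeff_one, hA0]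
    simp
  | (e+1), hd =>
    have h1 := coeff_derivative (A * (1 + X) - 1) e
    have h2 : (derivative (A * (1 + X) - 1)).coeff e = 0 := by
      rw [hder]
      have hdvd : (X:k[X])^s ∣ ((-1:k)^s / s.factorial) • LL k N ^ s + (-X)^N * Am := by
        refine dvd_add ?_ ?_
        · rw [smul_eq_C_mul]
          exact Dvd.dvd.mul_left (pow_dvd_pow_of_dvd (X_dvd_LL N) s) _
        · have hXN : (X:k[X])^s ∣ X^N := pow_dvd_pow X (by omega)
          refine Dvd.dvd.mul_right (hXN.trans ?_) _
          rw [neg_pow]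
          exact Dvd.dvd.mul_left dvd_rfl _
      exact X_pow_dvd_iff.mp hdvd e (by omega)
    rw [h2] at h1
    have h3 : ((e:k) + 1) ≠ 0 := Nat.cast_add_one_ne_zero e
    rcases mul_eq_zero.mp h1.symm with h | h
    · exact h
    · exact absurd h h3

variable {k W : Type*} [Field k] [CharZero k] [AddCommGroup W] [Module k W]

lemma aeval_LL (γ : W ≃ₗ[k] W) {c : k} (hc : c ≠ 0) (N : ℕ) :
    aeval (γ.toLinearMap - LinearMap.id : Module.End k W) (LL k N) = c • nablaOf γ c N := by
  rw [LL, nablaOf, map_sum, smul_smul, mul_inv_cancel₀ hc, one_smul]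
  refine Finset.sum_congr rfl fun i _ => ?_
  rw [map_smul, map_pow, aeval_X]

lemma commute_nabla (γ : W ≃ₗ[k] W) (c : k) (N : ℕ) :
    Commute (γ.toLinearMap : Module.End k W) (nablaOf γ c N) := by
  rw [nablaOf]
  refine Commute.smul_right ?_ _
  refine Commute.sum_right _ _ _ fun i _ => ?_
  refine Commute.smul_right ?_ _
  refine Commute.pow_right ?_ _
  exact (Commute.refl _).sub_right (Commute.one_right _)

/-- key exp-log computation -/
lemma coreA (γ : W ≃ₗ[k] W) {c : k} (hc : c ≠ 0) {N r : ℕ} (hrN : r ≤ N) {b : W}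
    (hb : ((γ.toLinearMap - LinearMap.id : W →ₗ[k] W) ^ r) b = 0) :
    ∑ m ∈ range r, (((-1:k)^m * c^m) / m.factorial) • γ ((nablaOf γ c N ^ m) b) = b := by
  set u : Module.End k W := γ.toLinearMap - LinearMap.id with hu
  obtain ⟨g, hg⟩ := lemP (k := k) r N hrN
  rw [mul_comm ((X:k[X])^r) g] at hg
  have h1 := congrArg (fun p : k[X] => (aeval u p) b) hg
  simp only [map_sub, map_mul, map_sum, map_smul, map_pow, map_one, map_add, aeval_X] at h1
  rw [aeval_LL γ hc N] at h1
  -- h1 : ((Σ_m a_m • (c • ∇)^m) * (1 + u) - 1) b = (aeval u g * u^r) b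
  have h2 : ((aeval u g) * u^r) b = 0 := by
    rw [Module.End.mul_apply, hb, map_zero]
  have h3 : (1 + u : Module.End k W) = γ.toLinearMap := by
    rw [hu]; ext w; simp
  rw [h2, h3, LinearMap.sub_apply, Module.End.one_apply, sub_eq_zero, Module.End.mul_apply,
    LinearMap.sum_apply] at h1
  refine Eq.trans ?_ h1
  refine Finset.sum_congr rfl fun x _ => ?_
  have hcomm := (commute_nabla γ c N).pow_right x
  have hcb := congrArg (fun f : Module.End k W => f b) hcomm
  simp only [Module.End.mul_apply] at hcb
  rw [LinearMap.smul_apply, _root_.smul_pow, LinearMap.smul_apply, smul_smul, ← hcb]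
  congr 1
  ring


variable {k W : Type*} [Field k] [CharZero k] [AddCommGroup W] [Module k W]
section G

variable (γ : W ≃ₗ[k] W) (c : k)

/-- factor `∇ = u * q` with `q` commuting with `u`. -/
lemma nabla_factor (N : ℕ) :
    ∃ q : Module.End k W, nablaOf γ c N = (γ.toLinearMap - LinearMap.id) * q ∧
      Commute (γ.toLinearMap - LinearMap.id : Module.End k W) q := by
  set u : Module.End k W := γ.toLinearMap - LinearMap.id with hu
  refine ⟨c⁻¹ • ∑ i ∈ Icc 1 N, ((-1:k)^(i+1) / i) • u ^ (i-1), ?_, ?_⟩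
  · rw [nablaOf, mul_smul_comm, Finset.mul_sum]
    refine congrArg _ (Finset.sum_congr rfl fun i hi => ?_)
    rw [mul_smul_comm]
    congr 1
    rw [← pow_succ']
    congr 1
    have := (Finset.mem_Icc.mp hi).1
    omega
  · refine Commute.smul_right ?_ _
    refine Commute.sum_right _ _ _ fun i _ => ?_
    exact Commute.smul_right (Commute.pow_right (Commute.refl _) _) _

lemma nabla_pow_nilp {N : ℕ} {a : W} (ha : ((γ.toLinearMap - LinearMap.id : W →ₗ[k] W) ^ N) a = 0)
    {i : ℕ} (hi : i ≤ N) :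
    ((γ.toLinearMap - LinearMap.id : W →ₗ[k] W) ^ (N - i)) ((nablaOf γ c N ^ i) a) = 0 := by
  set u : Module.End k W := γ.toLinearMap - LinearMap.id with hu
  obtain ⟨q, hq, hcomm⟩ := nabla_factor γ c N
  have h1 : (u ^ (N - i)) * (nablaOf γ c N ^ i) = q ^ i * u ^ N := by
    rw [hq, Commute.mul_pow hcomm, ← mul_assoc, ← pow_add,
      show N - i + i = N from by omega, (Commute.pow_pow hcomm N i).eq]
  have h2 := congrArg (fun f : Module.End k W => f a) h1
  simp only [Module.End.mul_apply] at h2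
  rw [h2, ha, map_zero]

variable (G : (ℕ →₀ W) →ₗ[k] (ℕ →₀ W))
variable (hG : ∀ (j : ℕ) (w : W),
      G (Finsupp.single j w) =
        ∑ i ∈ Finset.range (j + 1),
          ((j.choose i : k) * c ^ (j - i)) • Finsupp.single i (γ w))

include hG

lemma G_apply (v : ℕ →₀ W) (S : Finset ℕ) (hS : v.support ⊆ S) (i : ℕ) :
    G v i = ∑ j ∈ S, ((j.choose i : k) * c ^ (j - i)) • γ (v j) := by
  have hv : v = ∑ j ∈ S, Finsupp.single j (v j) := by
    rw [← Finset.sum_subset hS (fun j _ hj =>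
      by rw [Finsupp.notMem_support_iff.mp hj, Finsupp.single_zero])]
    exact (Finsupp.sum_single v).symm
  calc G v i = (∑ j ∈ S, G (Finsupp.single j (v j))) i := by rw [← map_sum, ← hv]
    _ = ∑ j ∈ S, (∑ i' ∈ Finset.range (j + 1),
          ((j.choose i' : k) * c ^ (j - i')) • Finsupp.single i' (γ (v j))) i := by
        rw [Finsupp.finset_sum_apply]
        exact Finset.sum_congr rfl fun j _ => by rw [hG]
    _ = ∑ j ∈ S, ((j.choose i : k) * c ^ (j - i)) • γ (v j) := by
        refine Finset.sum_congr rfl fun j _ => ?_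
        rw [Finsupp.finset_sum_apply]
        by_cases hij : i ≤ j
        · rw [Finset.sum_eq_single i]
          · rw [Finsupp.smul_apply, Finsupp.single_eq_same]
          · intro i' _ hne
            rw [Finsupp.smul_apply, Finsupp.single_eq_of_ne' hne, smul_zero]
          · intro h; exact absurd (Finset.mem_range.mpr (by omega)) h
        · rw [Finset.sum_eq_zero, eq_comm, Nat.choose_eq_zero_of_lt (by omega), Nat.cast_zero,
            zero_mul, zero_smul]
          intro i' hi'
          have hne : i' ≠ i := by rw [Finset.mem_range] at hi'; omega
          rw [Finsupp.smul_apply, Finsupp.single_eq_of_ne' hne, smul_zero]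


lemma part2 (hc : c ≠ 0) (a : W) (N : ℕ)
    (ha : ((γ.toLinearMap - LinearMap.id : W →ₗ[k] W) ^ N) a = 0) :
    G (∑ j ∈ Finset.range N,
        ((-1 : k) ^ j / (j.factorial : k)) • Finsupp.single j ((nablaOf γ c N ^ j) a)) =
      (∑ j ∈ Finset.range N,
        ((-1 : k) ^ j / (j.factorial : k)) • Finsupp.single j ((nablaOf γ c N ^ j) a)) ∧
    (∑ j ∈ Finset.range N,
        ((-1 : k) ^ j / (j.factorial : k)) • Finsupp.single j ((nablaOf γ c N ^ j) a)) 0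
      = a := by
  set E := ∑ j ∈ Finset.range N,
      ((-1 : k) ^ j / (j.factorial : k)) • Finsupp.single j ((nablaOf γ c N ^ j) a) with hE
  have hEi : ∀ i, E i = if i ∈ Finset.range N
      then ((-1 : k) ^ i / (i.factorial : k)) • ((nablaOf γ c N ^ i) a) else 0 := by
    intro i
    rw [hE, Finsupp.finset_sum_apply]
    simp only [Finsupp.smul_apply, Finsupp.single_apply, smul_ite, smul_zero,
      Finset.sum_ite_eq']
  have hconst : E 0 = a := by
    rw [hEi]
    rcases Nat.eq_zero_or_pos N with rfl | hN
    · rw [pow_zero, Module.End.one_apply] at ha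
      simp [ha.symm]
    · rw [if_pos (Finset.mem_range.mpr hN)]
      simp
  refine ⟨?_, hconst⟩
  ext i
  -- compute (G E) i
  have hGE : G E i = ∑ j ∈ Finset.range N,
      (((-1 : k) ^ j / (j.factorial : k)) * ((j.choose i : k) * c ^ (j - i))) •
        γ ((nablaOf γ c N ^ j) a) := by
    rw [hE, map_sum]
    rw [Finsupp.finset_sum_apply]
    refine Finset.sum_congr rfl fun j _ => ?_
    rw [map_smul, Finsupp.smul_apply, hG, Finsupp.finset_sum_apply]
    by_cases hij : i ≤ j
    · rw [Finset.sum_eq_single i]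
      · rw [Finsupp.smul_apply, Finsupp.single_eq_same, smul_smul]
      · intro i' _ hne
        rw [Finsupp.smul_apply, Finsupp.single_eq_of_ne' hne, smul_zero]
      · intro h; exact absurd (Finset.mem_range.mpr (by omega)) h
    · rw [Finset.sum_eq_zero, Nat.choose_eq_zero_of_lt (by omega), Nat.cast_zero,
        zero_mul, mul_zero, zero_smul, smul_zero]
      intro i' hi'
      have hne : i' ≠ i := by rw [Finset.mem_range] at hi'; omega
      rw [Finsupp.smul_apply, Finsupp.single_eq_of_ne' hne, smul_zero]
  rw [hGE, hEi]
  by_cases hiN : i ∈ Finset.range N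
  · rw [if_pos hiN]
    rw [Finset.mem_range] at hiN
    -- drop the terms j < i
    rw [Finset.range_eq_Ico, ← Finset.sum_Ico_consecutive _ (Nat.zero_le i) (le_of_lt hiN)]
    have hlow : ∑ j ∈ Finset.Ico 0 i,
        (((-1 : k) ^ j / (j.factorial : k)) * ((j.choose i : k) * c ^ (j - i))) •
          γ ((nablaOf γ c N ^ j) a) = 0 := by
      refine Finset.sum_eq_zero fun j hj => ?_
      rw [Finset.mem_Ico] at hj
      rw [Nat.choose_eq_zero_of_lt (by omega), Nat.cast_zero, zero_mul, mul_zero, zero_smul]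
    rw [hlow, zero_add, Finset.sum_Ico_eq_sum_range]
    have hterm : ∀ t ∈ Finset.range (N - i),
        (((-1 : k) ^ (i+t) / ((i+t).factorial : k)) *
            (((i+t).choose i : k) * c ^ (i + t - i))) • γ ((nablaOf γ c N ^ (i+t)) a)
        = ((-1 : k) ^ i / (i.factorial : k)) •
            ((((-1:k)^t * c^t) / t.factorial) • γ ((nablaOf γ c N ^ t) ((nablaOf γ c N ^ i) a))) := by
      intro t _
      have hvec : (nablaOf γ c N ^ (i+t)) a = (nablaOf γ c N ^ t) ((nablaOf γ c N ^ i) a) := by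
        rw [show i + t = t + i from by omega, pow_add, Module.End.mul_apply]
      have hif : ((i.factorial : k)) ≠ 0 := Nat.cast_ne_zero.mpr i.factorial_ne_zero
      have htf : ((t.factorial : k)) ≠ 0 := Nat.cast_ne_zero.mpr t.factorial_ne_zero
      have hitf : (((i+t).factorial : k)) ≠ 0 := Nat.cast_ne_zero.mpr (i+t).factorial_ne_zero
      have hch : (((i+t).choose i : k)) = ((i+t).factorial : k) /
          ((i.factorial : k) * ((t.factorial : k))) := by
        rw [Nat.cast_choose k (Nat.le_add_right i t), Nat.add_sub_cancel_left]
      rw [hvec, smul_smul, Nat.add_sub_cancel_left, hch, pow_add]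
      congr 1
      field_simp
    rw [Finset.sum_congr rfl hterm, ← Finset.smul_sum]
    congr 1
    exact coreA γ hc (by omega) (nabla_pow_nilp γ c ha (by omega))
  · rw [if_neg hiN]
    rw [Finset.mem_range] at hiN
    refine Finset.sum_eq_zero fun j hj => ?_
    rw [Finset.mem_range] at hj
    rw [Nat.choose_eq_zero_of_lt (by omega), Nat.cast_zero, zero_mul, mul_zero, zero_smul]

/-- every fixed vector has nilpotent constant term -/
lemma fixed_nilpotent (v : ℕ →₀ W) (hfix : G v = v) :
    ∃ N : ℕ, ((γ.toLinearMap - LinearMap.id : W →ₗ[k] W) ^ N) (v 0) = 0 := by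
  set u : Module.End k W := γ.toLinearMap - LinearMap.id with hu
  set D := (v.support.sup id) + 1 with hD
  have hsupp : v.support ⊆ Finset.range D := by
    intro j hj
    have := Finset.le_sup (f := id) hj
    simp only [id] at this
    exact Finset.mem_range.mpr (by omega)
  have hzero : ∀ j, D ≤ j → v j = 0 := by
    intro j hj
    by_contra h
    have := hsupp (Finsupp.mem_support_iff.mpr h)
    rw [Finset.mem_range] at this
    omega
  have hrel : ∀ i, v i = ∑ j ∈ Finset.range D, ((j.choose i : k) * c ^ (j - i)) • γ (v j) := by
    intro i
    conv_lhs => rw [← hfix]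
    exact G_apply γ c G hG v _ hsupp i
  have hcommE : ∀ (m : ℕ) (x : W), (u ^ m) (γ x) = γ ((u ^ m) x) := by
    intro m x
    have hcomm : Commute (γ.toLinearMap : Module.End k W) (u ^ m) :=
      Commute.pow_right ((Commute.refl _).sub_right (Commute.one_right _)) _
    have := congrArg (fun f : Module.End k W => f x) hcomm
    simp only [Module.End.mul_apply] at this
    exact this.symm
  have key : ∀ (m i : ℕ), D ≤ i + m → (u ^ m) (v i) = 0 := by
    intro m
    induction m with
    | zero =>
      intro i hi
      rw [pow_zero, Module.End.one_apply]
      exact hzero i (by omega)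
    | succ m ih =>
      intro i hi
      rcases le_or_gt D i with hDi | hDi
      · rw [hzero i hDi, map_zero]
      have hsum : v i = γ (v i) + ∑ j ∈ (Finset.range D).erase i,
          ((j.choose i : k) * c ^ (j - i)) • γ (v j) := by
        conv_lhs => rw [hrel i, ← Finset.add_sum_erase _ _ (Finset.mem_range.mpr hDi)]
        congr 1
        rw [Nat.choose_self, Nat.sub_self, pow_zero, Nat.cast_one, one_mul, one_smul]
      have hui : u (v i) = -(∑ j ∈ (Finset.range D).erase i,
          ((j.choose i : k) * c ^ (j - i)) • γ (v j)) := by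
        have h1 : u (v i) = γ (v i) - v i := by
          rw [hu]
          simp only [LinearMap.sub_apply, LinearMap.id_apply, LinearEquiv.coe_coe]
        calc u (v i) = γ (v i) - v i := h1
          _ = γ (v i) - (γ (v i) + ∑ j ∈ (Finset.range D).erase i,
              ((j.choose i : k) * c ^ (j - i)) • γ (v j)) := by rw [← hsum]
          _ = -(∑ j ∈ (Finset.range D).erase i,
              ((j.choose i : k) * c ^ (j - i)) • γ (v j)) := by abel
      have hstep : (u ^ (m+1)) (v i) = (u ^ m) (u (v i)) := by
        rw [pow_succ, Module.End.mul_apply]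
      rw [hstep, hui, map_neg, map_sum, neg_eq_zero]
      refine Finset.sum_eq_zero fun j hj => ?_
      rw [Finset.mem_erase] at hj
      rw [map_smul]
      rcases lt_or_gt_of_ne hj.1 with hji | hji
      · rw [Nat.choose_eq_zero_of_lt (by omega), Nat.cast_zero, zero_mul, zero_smul]
      · rw [hcommE, ih j (by omega), map_zero, smul_zero]
  exact ⟨D, key D 0 (by omega)⟩


omit hG in
lemma scalar_sum (x : k) (D i l : ℕ) (hl : l < D) :
    ∑ j ∈ Finset.range D, ((j.choose i : k) * c ^ (j - i)) * ((l.choose j : k) * x ^ (l - j))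
      = (l.choose i : k) * (c + x) ^ (l - i) := by
  by_cases hil : i ≤ l
  · have h1 : ∑ j ∈ Finset.range D,
        ((j.choose i : k) * c ^ (j - i)) * ((l.choose j : k) * x ^ (l - j))
        = ∑ j ∈ Finset.Ico i (l+1),
        ((j.choose i : k) * c ^ (j - i)) * ((l.choose j : k) * x ^ (l - j)) := by
      refine (Finset.sum_subset ?_ ?_).symm
      · intro j hj
        rw [Finset.mem_Ico] at hj
        exact Finset.mem_range.mpr (by omega)
      · intro j hj hj'
        rw [Finset.mem_range] at hj
        rw [Finset.mem_Ico] at hj'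
        rcases (by omega : j < i ∨ l < j) with h | h
        · rw [Nat.choose_eq_zero_of_lt h, Nat.cast_zero, zero_mul, zero_mul]
        · rw [Nat.choose_eq_zero_of_lt h, Nat.cast_zero, zero_mul, mul_zero]
    rw [h1, Finset.sum_Ico_eq_sum_range, show l + 1 - i = (l - i) + 1 from by omega,
      add_pow, Finset.mul_sum]
    refine Finset.sum_congr rfl fun t ht => ?_
    rw [Finset.mem_range] at ht
    have hch : (l.choose (i+t) : k) * ((i+t).choose i : k)
        = (l.choose i : k) * ((l-i).choose t : k) := by
      rw [← Nat.cast_mul, ← Nat.cast_mul, Nat.choose_mul (by omega),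
        Nat.add_sub_cancel_left]
    rw [Nat.add_sub_cancel_left, show l - (i + t) = l - i - t from by omega]
    calc ((i+t).choose i : k) * c ^ t * ((l.choose (i+t) : k) * x ^ (l - i - t))
        = ((l.choose (i+t) : k) * ((i+t).choose i : k)) * (c ^ t * x ^ (l - i - t)) := by ring
      _ = ((l.choose i : k) * ((l-i).choose t : k)) * (c ^ t * x ^ (l - i - t)) := by rw [hch]
      _ = (l.choose i : k) * (c ^ t * x ^ (l - i - t) * ((l-i).choose t : k)) := by ring
  · rw [Nat.choose_eq_zero_of_lt (by omega), Nat.cast_zero, zero_mul]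
    refine Finset.sum_eq_zero fun j hj => ?_
    rcases (by omega : j < i ∨ l < j) with h | h
    · rw [Nat.choose_eq_zero_of_lt h, Nat.cast_zero, zero_mul, zero_mul]
    · rw [Nat.choose_eq_zero_of_lt h, Nat.cast_zero, zero_mul, mul_zero]

lemma iterate_formula (v : ℕ →₀ W) (hfix : G v = v) (D : ℕ)
    (hsupp : v.support ⊆ Finset.range D) :
    ∀ (n : ℕ) (i : ℕ), v i = ∑ j ∈ Finset.range D,
      ((j.choose i : k) * (((n:k) * c)) ^ (j - i)) • ((γ.toLinearMap ^ n : W →ₗ[k] W)) (v j) := by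
  intro n
  induction n with
  | zero =>
    intro i
    simp only [Nat.cast_zero, zero_mul, pow_zero, Module.End.one_apply]
    rw [Finset.sum_eq_single i]
    · rw [Nat.choose_self, Nat.sub_self, pow_zero, Nat.cast_one, one_mul, one_smul]
    · intro j _ hne
      rcases lt_or_gt_of_ne hne with h | h
      · rw [Nat.choose_eq_zero_of_lt h, Nat.cast_zero, zero_mul, zero_smul]
      · rw [zero_pow (by omega : j - i ≠ 0), mul_zero, zero_smul]
    · intro hi
      rw [Finsupp.notMem_support_iff.mp (fun hmem => hi (hsupp hmem)), smul_zero]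
  | succ n ih =>
    intro i
    have hstep : v i = ∑ j ∈ Finset.range D, ((j.choose i : k) * c ^ (j - i)) • γ (v j) := by
      conv_lhs => rw [← hfix]
      exact G_apply γ c G hG v _ hsupp i
    rw [hstep]
    have hterm : ∀ j ∈ Finset.range D, ((j.choose i : k) * c ^ (j - i)) • γ (v j)
        = ∑ l ∈ Finset.range D,
            (((j.choose i : k) * c ^ (j - i)) * ((l.choose j : k) * (((n:k) * c)) ^ (l - j))) •
              ((γ.toLinearMap ^ (n+1) : W →ₗ[k] W)) (v l) := by
      intro j _
      conv_lhs => rw [ih j]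
      rw [map_sum, Finset.smul_sum]
      refine Finset.sum_congr rfl fun l _ => ?_
      rw [map_smul, smul_smul]
      congr 1
      rw [pow_succ', Module.End.mul_apply]
      rfl
    rw [Finset.sum_congr rfl hterm, Finset.sum_comm]
    refine Finset.sum_congr rfl fun l hl => ?_
    rw [← Finset.sum_smul, scalar_sum c ((n:k) * c) D i l (Finset.mem_range.mp hl)]
    congr 2
    push_cast
    ring


lemma fixed_unique (hc : c ≠ 0) (v : ℕ →₀ W) (hfix : G v = v) (h0 : v 0 = 0) : v = 0 := by
  set D := (v.support.sup id) + 1 with hD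
  have hsupp : v.support ⊆ Finset.range D := by
    intro j hj
    have := Finset.le_sup (f := id) hj
    simp only [id] at this
    exact Finset.mem_range.mpr (by omega)
  have hiter := iterate_formula γ c G hG v hfix D hsupp
  have hvan : ∀ n : ℕ, ∑ j ∈ Finset.range D, (((n:k) * c)) ^ j • v j = 0 := by
    intro n
    have h := (hiter n 0).symm
    rw [h0] at h
    have h2 : ∑ j ∈ Finset.range D, (((n:k) * c)) ^ j • ((γ.toLinearMap ^ n : W →ₗ[k] W)) (v j)
        = 0 := by
      rw [← h]
      refine Finset.sum_congr rfl fun j _ => ?_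
      rw [Nat.choose_zero_right, Nat.cast_one, one_mul, Nat.sub_zero]
    have h3 : ((γ.toLinearMap ^ n : W →ₗ[k] W))
        (∑ j ∈ Finset.range D, (((n:k) * c)) ^ j • v j) = 0 := by
      rw [map_sum]
      rw [← h2]
      exact Finset.sum_congr rfl fun j _ => by rw [map_smul]
    have hinj : Function.Injective ((γ.toLinearMap ^ n : W →ₗ[k] W)) := by
      intro x y hxy
      rw [Module.End.pow_apply, Module.End.pow_apply] at hxy
      exact Function.Injective.iterate (by exact γ.injective) n hxy
    exact hinj (by rw [h3, map_zero])
  have hcoef : ∀ j, v j = 0 := by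
    intro j
    by_cases hj : j < D
    · refine (Module.forall_dual_apply_eq_zero_iff k (v j)).mp fun φ => ?_
      set p : k[X] := ∑ j' ∈ Finset.range D, C (φ (v j')) * X ^ j' with hp
      have hroot : ∀ n : ℕ, p.IsRoot ((n:k) * c) := by
        intro n
        have := congrArg φ (hvan n)
        rw [map_sum, map_zero] at this
        rw [IsRoot.def, hp, eval_finset_sum]
        rw [← this]
        refine Finset.sum_congr rfl fun j' _ => ?_
        rw [eval_mul, eval_C, eval_pow, eval_X, map_smul, smul_eq_mul, mul_comm]
      have hinj' : Function.Injective (fun n : ℕ => (n:k) * c) := by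
        intro a b hab
        simp only at hab
        have := mul_right_cancel₀ hc hab
        exact_mod_cast this
      have hp0 : p = 0 := p.eq_zero_of_infinite_isRoot
        (Set.infinite_of_injective_forall_mem hinj' hroot)
      have := congrArg (fun q : k[X] => q.coeff j) hp0
      simp only [coeff_zero] at this
      rw [← this, hp, finset_sum_coeff]
      rw [Finset.sum_eq_single j]
      · rw [coeff_C_mul, coeff_X_pow, if_pos rfl, mul_one]
      · intro j' _ hne
        rw [coeff_C_mul, coeff_X_pow, if_neg (fun hh => hne hh.symm), mul_zero]
      · intro hmem
        exact absurd (Finset.mem_range.mpr hj) hmem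
    · exact Finsupp.notMem_support_iff.mp (fun hmem => hj (Finset.mem_range.mp (hsupp hmem)))
  ext j
  exact hcoef j


variable (ν : (ℕ →₀ W) →ₗ[k] (ℕ →₀ W))
variable (hν : ∀ (j : ℕ) (w : W), ν (Finsupp.single j w) = -(j • Finsupp.single (j - 1) w))

include hν in
lemma nu_comm : ∀ x : ℕ →₀ W, G (ν x) = ν (G x) := by
  have : G ∘ₗ ν = ν ∘ₗ G := by
    refine Finsupp.lhom_ext fun j w => ?_
    rw [LinearMap.comp_apply, LinearMap.comp_apply, hν, hG, map_neg, map_nsmul, map_sum]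
    rcases Nat.eq_zero_or_pos j with rfl | hj
    · simp [hν]
    obtain ⟨j', rfl⟩ : ∃ j'', j = j'' + 1 := ⟨j - 1, by omega⟩
    rw [Nat.add_sub_cancel, hG]
    have hRHS : ∑ i ∈ Finset.range (j' + 1 + 1),
        ν ((((j'+1).choose i : k) * c ^ (j' + 1 - i)) • Finsupp.single i (γ w))
        = ∑ t ∈ Finset.range (j' + 1),
            (((j'+1).choose (t+1) : k) * c ^ (j' - t)) •
              (-((t+1) • Finsupp.single t (γ w))) := by
      rw [Finset.sum_range_succ']
      have h0 : ν ((((j'+1).choose 0 : k) * c ^ (j' + 1 - 0)) • Finsupp.single 0 (γ w)) = 0 := by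
        rw [map_smul, hν, zero_smul, neg_zero, smul_zero]
      rw [h0, add_zero]
      refine Finset.sum_congr rfl fun t _ => ?_
      rw [map_smul, hν, Nat.add_sub_cancel, show j' + 1 - (t+1) = j' - t from by omega]
    rw [hRHS, Finset.smul_sum, ← Finset.sum_neg_distrib]
    refine Finset.sum_congr rfl fun t ht => ?_
    rw [Finset.mem_range] at ht
    -- scalars
    have key : ((j'+1:ℕ):k) * (((j'.choose t) : k) * c ^ (j' - t))
        = (((j'+1).choose (t+1) : k) * c ^ (j' - t)) * ((t+1:ℕ):k) := by
      have hnat := Nat.add_one_mul_choose_eq j' t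
      calc ((j'+1:ℕ):k) * (((j'.choose t) : k) * c ^ (j' - t))
          = (((j'+1) * j'.choose t : ℕ) : k) * c ^ (j' - t) := by push_cast; ring
        _ = (((j'+1).choose (t+1) * (t+1) : ℕ) : k) * c ^ (j' - t) := by rw [hnat]
        _ = (((j'+1).choose (t+1) : k) * c ^ (j' - t)) * ((t+1:ℕ):k) := by push_cast; ring
    calc -((j'+1) • ((j'.choose t : k) * c ^ (j' - t)) • Finsupp.single t (γ w))
        = -(((j'+1:ℕ):k) • ((j'.choose t : k) * c ^ (j' - t)) • Finsupp.single t (γ w)) := by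
          rw [Nat.cast_smul_eq_nsmul]
      _ = (-(((j'+1:ℕ):k) * (((j'.choose t) : k) * c ^ (j' - t)))) • Finsupp.single t (γ w) := by
          rw [smul_smul, neg_smul]
      _ = (-((((j'+1).choose (t+1) : k) * c ^ (j' - t)) * ((t+1:ℕ):k))) •
            Finsupp.single t (γ w) := by rw [key]
      _ = (((j'+1).choose (t+1) : k) * c ^ (j' - t)) •
            (-(((t+1:ℕ):k) • Finsupp.single t (γ w))) := by
          rw [smul_neg, smul_smul, neg_smul]
      _ = (((j'+1).choose (t+1) : k) * c ^ (j' - t)) •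
            (-((t+1) • Finsupp.single t (γ w))) := by rw [Nat.cast_smul_eq_nsmul]
  intro x
  have := congrArg (fun f : (ℕ →₀ W) →ₗ[k] (ℕ →₀ W) => f x) this
  simpa using this

end G

end Stmt8Aux

open Finset in
/-- Wu, Lemma `lemmagammanilpotent`, γ-version (abstract form): let `k` be a field of
characteristic zero, `W` a `k`-vector space, `γ` a `k`-linear automorphism of `W`, `c ≠ 0`,
and extend `γ` to `W[X]` by `γ(w·X^j) = γ(w)·(X+c)^j`.  Then the constant-term map is a
bijection from the fixed space `{v ∈ W[X] : γv = v}` onto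
`W^{(γ-1)-nil} = {a : (γ-1)^N a = 0 for some N}`; its inverse sends `a` to
`Σ_j ((-1)^j/j!)·∇^j(a)·X^j` with `∇ = (1/c)·log γ`; and under this bijection the
derivation `ν(w·X^j) = -j·w·X^{j-1}` corresponds to `∇`. -/
theorem stmt8 (k : Type*) [Field k] [CharZero k]
    (W : Type*) [AddCommGroup W] [Module k W]
    (γ : W ≃ₗ[k] W) (c : k) (hc : c ≠ 0)
    (G : (ℕ →₀ W) →ₗ[k] (ℕ →₀ W))
    (hG : ∀ (j : ℕ) (w : W),
      G (Finsupp.single j w) =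
        ∑ i ∈ Finset.range (j + 1),
          ((j.choose i : k) * c ^ (j - i)) • Finsupp.single i (γ w))
    (ν : (ℕ →₀ W) →ₗ[k] (ℕ →₀ W))
    (hν : ∀ (j : ℕ) (w : W), ν (Finsupp.single j w) = -(j • Finsupp.single (j - 1) w)) :
    Set.BijOn (fun v : ℕ →₀ W => v 0)
      {v : ℕ →₀ W | G v = v}
      {a : W | ∃ N : ℕ, (((γ.toLinearMap - LinearMap.id : W →ₗ[k] W)) ^ N) a = 0} ∧
    (∀ (a : W) (N : ℕ), (((γ.toLinearMap - LinearMap.id : W →ₗ[k] W)) ^ N) a = 0 →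
      G (∑ j ∈ Finset.range N,
          ((-1 : k) ^ j / (j.factorial : k)) • Finsupp.single j ((nablaOf γ c N ^ j) a)) =
        (∑ j ∈ Finset.range N,
          ((-1 : k) ^ j / (j.factorial : k)) • Finsupp.single j ((nablaOf γ c N ^ j) a)) ∧
      (∑ j ∈ Finset.range N,
          ((-1 : k) ^ j / (j.factorial : k)) • Finsupp.single j ((nablaOf γ c N ^ j) a)) 0
        = a) ∧
    (∀ v : ℕ →₀ W, G v = v →
      G (ν v) = ν v ∧
      ∀ N : ℕ, (((γ.toLinearMap - LinearMap.id : W →ₗ[k] W)) ^ N) (v 0) = 0 →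
        (ν v) 0 = nablaOf γ c N (v 0)) := by
  refine ⟨⟨?_, ?_, ?_⟩, ?_, ?_⟩
  · -- MapsTo
    intro v hv
    exact Stmt8Aux.fixed_nilpotent γ c G hG v hv
  · -- InjOn
    intro v hv w hw heq
    have h1 : G (v - w) = v - w := by rw [map_sub, hv, hw]
    have h2 : (v - w) 0 = 0 := by
      rw [Finsupp.sub_apply]
      exact sub_eq_zero_of_eq heq
    have := Stmt8Aux.fixed_unique γ c G hG hc (v - w) h1 h2
    exact sub_eq_zero.mp this
  · -- SurjOn
    intro a ha
    obtain ⟨N, hN⟩ := ha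
    obtain ⟨hEfix, hE0⟩ := Stmt8Aux.part2 γ c G hG hc a N hN
    exact ⟨_, hEfix, hE0⟩
  · -- part 2
    intro a N ha
    exact Stmt8Aux.part2 γ c G hG hc a N ha
  · -- part 3
    intro v hfix
    constructor
    · rw [Stmt8Aux.nu_comm γ c G hG ν hν v, hfix]
    · intro N hN
      set a := v 0 with ha0
      obtain ⟨hEfix, hE0⟩ := Stmt8Aux.part2 γ c G hG hc a N hN
      have hvE : v = ∑ j ∈ Finset.range N,
          ((-1 : k) ^ j / (j.factorial : k)) • Finsupp.single j ((nablaOf γ c N ^ j) a) := by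
        refine sub_eq_zero.mp (Stmt8Aux.fixed_unique γ c G hG hc _ ?_ ?_)
        · rw [map_sub, hfix, hEfix]
        · rw [Finsupp.sub_apply, hE0, ← ha0, sub_self]
      match N, hN, hEfix, hE0, hvE with
      | 0, hN, hEfix, hE0, hvE =>
        have ha' : a = 0 := by
          rw [pow_zero, Module.End.one_apply] at hN
          exact hN
        rw [hvE]
        simp [ha']
      | 1, hN, hEfix, hE0, hvE =>
        rw [pow_one] at hN
        have hlhs : (ν v) 0 = 0 := by
          rw [hvE]
          simp [hν]
        rw [hlhs, nablaOf]
        rw [Finset.Icc_self, Finset.sum_singleton]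
        simp only [LinearMap.smul_apply, pow_one]
        rw [hN]
        simp
      | (n+2), hN, hEfix, hE0, hvE =>
        conv_lhs => rw [hvE]
        rw [map_sum, Finsupp.finset_sum_apply]
        rw [Finset.sum_eq_single 1]
        · rw [map_smul, hν, Finsupp.smul_apply, Finsupp.neg_apply, one_nsmul,
            Finsupp.single_eq_same, pow_one]
          simp
        · intro j _ hne
          rw [map_smul, hν, Finsupp.smul_apply, Finsupp.neg_apply]
          match j, hne with
          | 0, _ => simp
          | (j''+1), hne =>
            have : (j''+1) - 1 ≠ 0 := by omega
            rw [Nat.add_sub_cancel] at this ⊢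
            rw [Finsupp.smul_apply, Finsupp.single_eq_of_ne' this, smul_zero, neg_zero, smul_zero]
        · intro h1
          exact absurd (Finset.mem_range.mpr (by omega)) h1
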